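/- Let T ⊆ {1,…,p} with |T| = k and let θ = (θ⁽¹⁾, θ⁽²⁾) ∈ ℝ^{2p} belong to the cone C(3, T) = {θ : |θ_{T^c}|₁ < 3|θ_T|₁} (where T is viewed as a subset of {1,…,2p}). Define T′ ⊆ {1,…,p} by i ∈ T′ iff i ∈ T or i+p ∈ T. Then at least one of the vectors θ⁽¹⁾ + θ⁽²⁾ and θ⁽¹⁾ − θ⁽²⁾ belongs to the cone C(6, T′) = {v ∈ ℝ^p : |v_{T′^c}|₁ < 6|v_{T′}|₁}. -/

import Mathlib

open Finset

/-- Cone-transfer lemma: if `θ = (θ⁽¹⁾, θ⁽²⁾) ∈ ℝ^{2p}` (indexed by `Fin p ⊕ Fin p`)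
belongs to the cone `C(3, T) = {θ : |θ_{T^c}|₁ < 3|θ_T|₁}`, and
`T′ = {i : i ∈ T or i+p ∈ T}`, then at least one of `θ⁽¹⁾ + θ⁽²⁾` and
`θ⁽¹⁾ − θ⁽²⁾` belongs to the cone `C(6, T′)`. -/
theorem cone_transfer {p : ℕ} (θ1 θ2 : Fin p → ℝ) (T : Finset (Fin p ⊕ Fin p))
    (hcone : ∑ i ∈ Tᶜ, |Sum.elim θ1 θ2 i| < 3 * ∑ i ∈ T, |Sum.elim θ1 θ2 i|) :
    (∑ i ∈ (Finset.univ.filter fun i : Fin p => Sum.inl i ∈ T ∨ Sum.inr i ∈ T)ᶜ,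
        |θ1 i + θ2 i| <
      6 * ∑ i ∈ Finset.univ.filter fun i : Fin p => Sum.inl i ∈ T ∨ Sum.inr i ∈ T,
        |θ1 i + θ2 i|) ∨
    (∑ i ∈ (Finset.univ.filter fun i : Fin p => Sum.inl i ∈ T ∨ Sum.inr i ∈ T)ᶜ,
        |θ1 i - θ2 i| <
      6 * ∑ i ∈ Finset.univ.filter fun i : Fin p => Sum.inl i ∈ T ∨ Sum.inr i ∈ T,
        |θ1 i - θ2 i|) := by
  set T' : Finset (Fin p) :=
    Finset.univ.filter fun i : Fin p => Sum.inl i ∈ T ∨ Sum.inr i ∈ T with hT'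
  by_contra hc
  push_neg at hc
  obtain ⟨h1, h2⟩ := hc
  have habs : ∀ s : Finset (Fin p),
      ∑ j ∈ s.image Sum.inl ∪ s.image Sum.inr, |Sum.elim θ1 θ2 j|
        = ∑ i ∈ s, |θ1 i| + ∑ i ∈ s, |θ2 i| := by
    intro s
    have hdisj : Disjoint (s.image Sum.inl) (s.image Sum.inr) := by
      rw [Finset.disjoint_left]
      rintro x hx hy
      simp only [Finset.mem_image] at hx hy
      obtain ⟨a, -, rfl⟩ := hx
      obtain ⟨b, -, hb⟩ := hy
      cases hb
    rw [Finset.sum_union hdisj,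
      Finset.sum_image (fun a _ b _ h => Sum.inl.inj h),
      Finset.sum_image (fun a _ b _ h => Sum.inr.inj h)]
    simp
  have key1 : ∑ i ∈ T'ᶜ, (|θ1 i| + |θ2 i|) ≤ ∑ j ∈ Tᶜ, |Sum.elim θ1 θ2 j| := by
    rw [Finset.sum_add_distrib, ← habs]
    apply Finset.sum_le_sum_of_subset_of_nonneg
    · intro j hj
      simp only [Finset.mem_union, Finset.mem_image] at hj
      rcases hj with ⟨i, hi, rfl⟩ | ⟨i, hi, rfl⟩ <;>
        · simp only [hT', Finset.mem_compl, Finset.mem_filter, Finset.mem_univ,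
            true_and] at hi ⊢
          tauto
    · intro j _ _
      positivity
  have key2 : ∑ j ∈ T, |Sum.elim θ1 θ2 j| ≤ ∑ i ∈ T', (|θ1 i| + |θ2 i|) := by
    rw [Finset.sum_add_distrib, ← habs]
    apply Finset.sum_le_sum_of_subset_of_nonneg
    · intro j hj
      cases j with
      | inl i =>
        exact Finset.mem_union_left _
          (Finset.mem_image_of_mem _ (by simp [hT', hj]))
      | inr i =>
        exact Finset.mem_union_right _
          (Finset.mem_image_of_mem _ (by simp [hT', hj]))
    · intro j _ _
      positivity
  have hsum1 : ∑ i ∈ T'ᶜ, |θ1 i + θ2 i| + ∑ i ∈ T'ᶜ, |θ1 i - θ2 i|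
      ≤ 2 * ∑ i ∈ T'ᶜ, (|θ1 i| + |θ2 i|) := by
    rw [← Finset.sum_add_distrib, Finset.mul_sum]
    apply Finset.sum_le_sum
    intro i _
    have ha := abs_add_le (θ1 i) (θ2 i)
    have hb := abs_sub (θ1 i) (θ2 i)
    linarith
  have hsum2 : ∑ i ∈ T', (|θ1 i| + |θ2 i|)
      ≤ ∑ i ∈ T', |θ1 i + θ2 i| + ∑ i ∈ T', |θ1 i - θ2 i| := by
    rw [← Finset.sum_add_distrib]
    apply Finset.sum_le_sum
    intro i _
    rcases abs_cases (θ1 i) with ⟨e1, s1⟩ | ⟨e1, s1⟩ <;>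
      rcases abs_cases (θ2 i) with ⟨e2, s2⟩ | ⟨e2, s2⟩ <;>
      rcases abs_cases (θ1 i + θ2 i) with ⟨e3, s3⟩ | ⟨e3, s3⟩ <;>
      rcases abs_cases (θ1 i - θ2 i) with ⟨e4, s4⟩ | ⟨e4, s4⟩ <;>
      linarith
  linarith
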